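/- Let Ω ⊂ ℝ^d be compact, f⁺ ≪ Lebesgue supported in Ω, and γ an optimal transport plan from f⁺ to a measure supported on ∂Ω for the cost |x−y|. If every transport segment [x,y] in the support of γ satisfies [x,y] ∩ Ω = [x, P(x)] where P(x) is the projection of x onto ∂Ω, then the transport density of γ restricted to Ω equals the transport density of the plan (id, P)#f⁺. -/

import Mathlib

open MeasureTheory Metric Set
open scoped MeasureTheory
open scoped Pointwise

/-- The transport density of a plan `γ`: `σ_γ(A) = ∫ H¹(A ∩ [x,y]) dγ(x,y)`. -/
noncomputable def transportDensity {d : ℕ}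
    (γ : Measure (EuclideanSpace ℝ (Fin d) × EuclideanSpace ℝ (Fin d)))
    (A : Set (EuclideanSpace ℝ (Fin d))) : ENNReal :=
  ∫⁻ p, μH[1] (A ∩ segment ℝ p.1 p.2) ∂γ

/- Auxiliary lemmas. -/

/-- Explicit formula for the H¹ measure of `A` intersected with a segment. -/
lemma hausdorff_inter_segment {d : ℕ} (A : Set (EuclideanSpace ℝ (Fin d)))
    (x y : EuclideanSpace ℝ (Fin d)) :
    μH[1] (A ∩ segment ℝ x y) =
      (‖y - x‖₊ : ENNReal) *
        volume {t : ℝ | t ∈ Icc (0:ℝ) 1 ∧ x + t • (y - x) ∈ A} := by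
  rcases eq_or_ne y x with h | hxy
  · subst h
    have h1 : segment ℝ y y = {y} := segment_same ℝ y
    haveI := MeasureTheory.Measure.noAtoms_hausdorff (EuclideanSpace ℝ (Fin d)) one_pos
    have : μH[1] (A ∩ segment ℝ y y) ≤ μH[1] {y} := by
      rw [h1]; exact measure_mono inter_subset_right
    simp only [measure_singleton, nonpos_iff_eq_zero] at this
    rw [h1] at this
    simp [this, sub_self]
  · set r : ℝ := ‖y - x‖ with hr
    have hrpos : 0 < r := by simpa [hr] using sub_ne_zero.2 hxy
    set f : ℝ → EuclideanSpace ℝ (Fin d) := fun t => x + t • (y - x) with hf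
    set g : ℝ → EuclideanSpace ℝ (Fin d) := fun u => x + (r⁻¹ * u) • (y - x) with hg
    have hgiso : Isometry g := by
      refine Isometry.of_dist_eq fun u u' => ?_
      simp only [hg, dist_eq_norm]
      rw [show (x + (r⁻¹ * u) • (y - x)) - (x + (r⁻¹ * u') • (y - x))
            = (r⁻¹ * (u - u')) • (y - x) by rw [mul_sub, sub_smul]; abel]
      rw [norm_smul, Real.norm_eq_abs, abs_mul, abs_inv, abs_of_pos hrpos, ← hr]
      rw [Real.norm_eq_abs]
      field_simp
    set B : Set ℝ := {t : ℝ | t ∈ Icc (0:ℝ) 1 ∧ x + t • (y - x) ∈ A} with hB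
    have hseg : segment ℝ x y = f '' Icc (0:ℝ) 1 := segment_eq_image' (𝕜 := ℝ) x y
    have hAB : A ∩ segment ℝ x y = f '' B := by
      rw [hseg, inter_comm]
      have : B = Icc (0:ℝ) 1 ∩ f ⁻¹' A := rfl
      rw [this, image_inter_preimage]
    have hfg : f '' B = g '' (r • B) := by
      rw [← image_smul, image_image]
      funext t
      simp only [hg, hf, smul_eq_mul, inv_mul_cancel_left₀ hrpos.ne']
    rw [hAB, hfg, hgiso.hausdorffMeasure_image (Or.inl zero_le_one),
      ← MeasureTheory.hausdorffMeasure_real, MeasureTheory.hausdorffMeasure_real,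
      Measure.addHaar_smul]
    simp only [Module.finrank_self, pow_one, abs_of_pos hrpos]
    rw [hr, ofReal_norm_eq_enorm, enorm_eq_nnnorm]

lemma segFun_measurable {d : ℕ} (A : Set (EuclideanSpace ℝ (Fin d)))
    (hA : MeasurableSet A) :
    Measurable fun p : EuclideanSpace ℝ (Fin d) × EuclideanSpace ℝ (Fin d) =>
      (‖p.2 - p.1‖₊ : ENNReal) *
        volume {t : ℝ | t ∈ Icc (0:ℝ) 1 ∧ p.1 + t • (p.2 - p.1) ∈ A} := by
  have h1 : Measurable fun p : EuclideanSpace ℝ (Fin d) × EuclideanSpace ℝ (Fin d) =>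
      (‖p.2 - p.1‖₊ : ENNReal) :=
    (measurable_snd.sub measurable_fst).nnnorm.coe_nnreal_ennreal
  refine h1.mul ?_
  have hs : MeasurableSet {q : (EuclideanSpace ℝ (Fin d) × EuclideanSpace ℝ (Fin d)) × ℝ |
      q.2 ∈ Icc (0:ℝ) 1 ∧ q.1.1 + q.2 • (q.1.2 - q.1.1) ∈ A} := by
    refine (measurable_snd measurableSet_Icc).inter ?_
    have hc : Continuous fun q : (EuclideanSpace ℝ (Fin d) × EuclideanSpace ℝ (Fin d)) × ℝ =>
        q.1.1 + q.2 • (q.1.2 - q.1.1) :=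
      (continuous_fst.fst).add (continuous_snd.smul (continuous_fst.snd.sub continuous_fst.fst))
    exact hc.measurable hA
  exact measurable_measure_prodMk_left hs

/-- If `γ` is an optimal plan from `f⁺ ≪ Leb` (supported in a compact `Ω`) to a measure on
`∂Ω`, and every transport segment satisfies `[x,y] ∩ Ω = [x, P x]` with `P` the projection
onto `∂Ω`, then the transport density of `γ` restricted to `Ω` equals the transport density
of the projection plan `(id, P)#f⁺`. -/
theorem transport_density_restriction {d : ℕ}
    (Ω : Set (EuclideanSpace ℝ (Fin d))) (hΩ : IsCompact Ω)
    (fp : Measure (EuclideanSpace ℝ (Fin d))) [IsFiniteMeasure fp]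
    (habs : fp ≪ volume) (hsupp : fp Ωᶜ = 0)
    (γ : Measure (EuclideanSpace ℝ (Fin d) × EuclideanSpace ℝ (Fin d)))
    (hγ1 : γ.map Prod.fst = fp)
    (hγ2 : (γ.map Prod.snd) (frontier Ω)ᶜ = 0)
    (hopt : ∀ γ' : Measure (EuclideanSpace ℝ (Fin d) × EuclideanSpace ℝ (Fin d)),
      γ'.map Prod.fst = fp → γ'.map Prod.snd = γ.map Prod.snd →
      ∫ p, dist p.1 p.2 ∂γ ≤ ∫ p, dist p.1 p.2 ∂γ')
    (P : EuclideanSpace ℝ (Fin d) → EuclideanSpace ℝ (Fin d)) (hPmeas : Measurable P)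
    (hP : ∀ᵐ x ∂fp, P x ∈ frontier Ω ∧ dist x (P x) = Metric.infDist x (frontier Ω))
    (hseg : ∀ᵐ p ∂γ, segment ℝ p.1 p.2 ∩ Ω = segment ℝ p.1 (P p.1)) :
    ∀ A : Set (EuclideanSpace ℝ (Fin d)), MeasurableSet A →
      transportDensity γ (A ∩ Ω) = transportDensity (fp.map fun x => (x, P x)) A := by
  intro A hA
  set F : EuclideanSpace ℝ (Fin d) × EuclideanSpace ℝ (Fin d) → ENNReal := fun p =>
    (‖p.2 - p.1‖₊ : ENNReal) *
      volume {t : ℝ | t ∈ Icc (0:ℝ) 1 ∧ p.1 + t • (p.2 - p.1) ∈ A} with hFdef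
  have hFmeas : Measurable F := segFun_measurable A hA
  have hFval : ∀ x y, μH[1] (A ∩ segment ℝ x y) = F (x, y) := fun x y =>
    hausdorff_inter_segment A x y
  have hPmk : Measurable fun x : EuclideanSpace ℝ (Fin d) => (x, P x) :=
    measurable_id.prodMk hPmeas
  have hRHS : transportDensity (fp.map fun x => (x, P x)) A = ∫⁻ x, F (x, P x) ∂fp := by
    rw [transportDensity]
    have : ∀ p : EuclideanSpace ℝ (Fin d) × EuclideanSpace ℝ (Fin d),
        μH[1] (A ∩ segment ℝ p.1 p.2) = F p := fun p => hFval p.1 p.2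
    simp_rw [this]
    rw [lintegral_map hFmeas hPmk]
  have hLHS : transportDensity γ (A ∩ Ω) = ∫⁻ x, F (x, P x) ∂fp := by
    rw [transportDensity]
    have hcong : ∀ᵐ p ∂γ, μH[1] ((A ∩ Ω) ∩ segment ℝ p.1 p.2) = F (p.1, P p.1) := by
      filter_upwards [hseg] with p hp
      have : (A ∩ Ω) ∩ segment ℝ p.1 p.2 = A ∩ segment ℝ p.1 (P p.1) := by
        rw [inter_assoc, inter_comm Ω, hp]
      rw [this, hFval]
    rw [lintegral_congr_ae hcong]
    rw [← hγ1]
    exact (lintegral_map (hFmeas.comp hPmk) measurable_fst).symm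
  rw [hLHS, hRHS]
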